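/- arXiv:2309.01863 — 2 statements merged into one kernel-verified Lean document; each statement's English description precedes it below -/
import Mathlib

section
/- Let A be a real symmetric 3×3 matrix with trace zero and A ≠ 0. Define the mode μ(A) = 3√6 · det(A)/‖A‖³, where ‖A‖ is the Frobenius norm. Then −1 ≤ μ(A) ≤ 1. -/
/-- The Frobenius norm of a 3×3 real matrix. -/
noncomputable def frobeniusNorm3 (A : Matrix (Fin 3) (Fin 3) ℝ) : ℝ :=
  Real.sqrt (∑ i, ∑ j, (A i j) ^ 2)

/-- The mode of a traceless symmetric tensor: `μ(A) = 3√6 · det A / ‖A‖³`. -/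
noncomputable def tensorMode (A : Matrix (Fin 3) (Fin 3) ℝ) : ℝ :=
  3 * Real.sqrt 6 * A.det / (frobeniusNorm3 A) ^ 3

/-- For a nonzero real symmetric traceless 3×3 matrix `A`,
the mode satisfies `−1 ≤ μ(A) ≤ 1`. -/
theorem mode_bounds (A : Matrix (Fin 3) (Fin 3) ℝ)
    (hs : A.IsSymm) (ht : A.trace = 0) (hne : A ≠ 0) :
    -1 ≤ tensorMode A ∧ tensorMode A ≤ 1 := by
  have hH : A.IsHermitian := by
    rw [Matrix.IsHermitian, Matrix.conjTranspose_eq_transpose_of_trivial]; exact hs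
  set U : Matrix (Fin 3) (Fin 3) ℝ := (hH.eigenvectorUnitary : Matrix (Fin 3) (Fin 3) ℝ) with hU
  set D : Matrix (Fin 3) (Fin 3) ℝ :=
    Matrix.diagonal (RCLike.ofReal ∘ hH.eigenvalues) with hD
  have hUU : star U * U = 1 := Matrix.mem_unitaryGroup_iff'.mp hH.eigenvectorUnitary.2
  have hst : A = U * D * star U := hH.spectral_theorem
  set x := hH.eigenvalues 0
  set y := hH.eigenvalues 1
  set z := hH.eigenvalues 2
  -- trace
  have htr : x + y + z = 0 := by
    have : A.trace = x + y + z := by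
      rw [hst, Matrix.trace_mul_comm (U * D) (star U), ← Matrix.mul_assoc, hUU, Matrix.one_mul,
        hD, Matrix.trace_diagonal, Fin.sum_univ_three]
      rfl
    linarith [this ▸ ht]
  -- determinant
  have hdet : A.det = x * y * z := by
    have := hH.det_eq_prod_eigenvalues
    rw [Fin.prod_univ_three] at this
    exact this
  -- Frobenius
  have hAA : (A * A).trace = x ^ 2 + y ^ 2 + z ^ 2 := by
    have h1 : A * A = U * (D * D) * star U := by
      rw [hst]
      calc U * D * star U * (U * D * star U)
          = U * D * (star U * U) * D * star U := by
            simp only [Matrix.mul_assoc]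
        _ = U * (D * D) * star U := by rw [hUU]; simp only [Matrix.mul_assoc, Matrix.mul_one]
    rw [h1, Matrix.trace_mul_comm (U * (D * D)) (star U), ← Matrix.mul_assoc, hUU,
      Matrix.one_mul, hD, Matrix.diagonal_mul_diagonal, Matrix.trace_diagonal,
      Fin.sum_univ_three]
    simp [sq]
    rfl
  have hfro : ∑ i, ∑ j, (A i j) ^ 2 = x ^ 2 + y ^ 2 + z ^ 2 := by
    rw [← hAA, Matrix.trace, Fin.sum_univ_three]
    simp only [Matrix.diag_apply, Matrix.mul_apply, Fin.sum_univ_three]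
    have h01 := hs.apply 0 1
    have h02 := hs.apply 0 2
    have h12 := hs.apply 1 2
    ring_nf
    nlinarith [h01, h02, h12, sq_nonneg (A 0 1), sq_nonneg (A 0 2)]
  -- positivity
  have hSpos : 0 < x ^ 2 + y ^ 2 + z ^ 2 := by
    rw [← hfro]
    rcases lt_or_eq_of_le (show (0:ℝ) ≤ ∑ i, ∑ j, (A i j) ^ 2 by positivity) with h | h
    · exact h
    · exfalso
      apply hne
      ext i j
      have h1 := (Finset.sum_eq_zero_iff_of_nonneg
        (fun i _ => Finset.sum_nonneg fun j _ => sq_nonneg (A i j))).mp h.symm i (Finset.mem_univ i)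
      have h2 := (Finset.sum_eq_zero_iff_of_nonneg
        (fun j _ => sq_nonneg (A i j))).mp h1 j (Finset.mem_univ j)
      have := pow_eq_zero_iff (n := 2) (by norm_num) |>.mp h2
      simpa using this
  have hz : z = -x - y := by linarith
  have key : 54 * (x * y * z) ^ 2 ≤ (x ^ 2 + y ^ 2 + z ^ 2) ^ 3 := by
    rw [hz]
    nlinarith [sq_nonneg ((x - y) * (2 * x + y) * (x + 2 * y))]
  have hnorm : frobeniusNorm3 A = Real.sqrt (x ^ 2 + y ^ 2 + z ^ 2) := by
    rw [frobeniusNorm3, hfro]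
  have hnpos : 0 < frobeniusNorm3 A ^ 3 := by
    rw [hnorm]
    exact pow_pos (Real.sqrt_pos.mpr hSpos) 3
  have hsq : (frobeniusNorm3 A ^ 3) ^ 2 = (x ^ 2 + y ^ 2 + z ^ 2) ^ 3 := by
    rw [hnorm]
    calc (Real.sqrt (x ^ 2 + y ^ 2 + z ^ 2) ^ 3) ^ 2
        = (Real.sqrt (x ^ 2 + y ^ 2 + z ^ 2) ^ 2) ^ 3 := by ring
      _ = (x ^ 2 + y ^ 2 + z ^ 2) ^ 3 := by rw [Real.sq_sqrt hSpos.le]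
  have h6 : Real.sqrt 6 ^ 2 = 6 := Real.sq_sqrt (by norm_num)
  have hmu2 : tensorMode A ^ 2 ≤ 1 := by
    rw [tensorMode, div_pow, hdet, div_le_one (by positivity)]
    have hnum : (3 * Real.sqrt 6 * (x * y * z)) ^ 2 = 54 * (x * y * z) ^ 2 := by
      rw [mul_pow, mul_pow, h6]; ring
    rw [hnum, hsq]
    exact key
  have habs : |tensorMode A| ≤ 1 := by
    rwa [← sq_le_one_iff_abs_le_one]
  exact abs_le.mp habs
end

section
/- Let A be a real symmetric 3×3 matrix with trace zero, A ≠ 0, and eigenvalues λ₁ ≥ λ₂ ≥ λ₃. Then μ(A) = 1 (where μ(A) = 3√6·det(A)/‖A‖³) if and only if λ₂ = λ₃ (the two smaller eigenvalues are equal and A is not zero). -/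
open Polynomial in
private lemma charpoly_fin_three' (A : Matrix (Fin 3) (Fin 3) ℝ) :
    A.charpoly = X^3 - C (A 0 0 + A 1 1 + A 2 2) * X^2
      + C (A 0 0 * A 1 1 + A 0 0 * A 2 2 + A 1 1 * A 2 2
           - A 0 1 * A 1 0 - A 0 2 * A 2 0 - A 1 2 * A 2 1) * X
      - C (A 0 0 * A 1 1 * A 2 2 - A 0 0 * A 1 2 * A 2 1 - A 0 1 * A 1 0 * A 2 2
           + A 0 1 * A 1 2 * A 2 0 + A 0 2 * A 1 0 * A 2 1 - A 0 2 * A 1 1 * A 2 0) := by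
  rw [Matrix.charpoly, Matrix.det_fin_three]
  simp only [Matrix.charmatrix_apply_eq, Matrix.charmatrix_apply_ne, Fin.zero_eta, Fin.mk_one,
    ne_eq, Fin.reduceEq, not_false_eq_true, C_add, C_mul, C_sub]
  ring

open Polynomial in
private lemma coeffs_cubic (a b c : ℝ) :
    (X^3 - C a * X^2 + C b * X - C c : ℝ[X]).coeff 2 = -a ∧
    (X^3 - C a * X^2 + C b * X - C c : ℝ[X]).coeff 1 = b ∧
    (X^3 - C a * X^2 + C b * X - C c : ℝ[X]).coeff 0 = -c := by
  refine ⟨?_, ?_, ?_⟩ <;> simp [coeff_X_pow, coeff_C]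

open Polynomial in
private lemma expand_factored (l₁ l₂ l₃ : ℝ) :
    (X - C l₁) * (X - C l₂) * (X - C l₃) =
    X^3 - C (l₁+l₂+l₃) * X^2 + C (l₁*l₂+l₁*l₃+l₂*l₃) * X - C (l₁*l₂*l₃) := by
  simp only [C_add, C_mul]; ring

private lemma core_mode (l₁ l₂ l₃ S : ℝ) (hsum : l₁ + l₂ + l₃ = 0)
    (hS : S = l₁^2 + l₂^2 + l₃^2) (hSpos : 0 < S)
    (h12 : l₂ ≤ l₁) (h23 : l₃ ≤ l₂) :
    3 * Real.sqrt 6 * (l₁ * l₂ * l₃) / (Real.sqrt S) ^ 3 = 1 ↔ l₂ = l₃ := by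
  have h6 : (0:ℝ) < Real.sqrt 6 := Real.sqrt_pos.mpr (by norm_num)
  have h6sq : Real.sqrt 6 ^ 2 = 6 := Real.sq_sqrt (by norm_num)
  have hsS : Real.sqrt S ^ 2 = S := Real.sq_sqrt hSpos.le
  have hsSpos : 0 < Real.sqrt S := Real.sqrt_pos.mpr hSpos
  constructor
  · intro h
    have hden : (Real.sqrt S) ^ 3 ≠ 0 := by positivity
    have heq : 3 * Real.sqrt 6 * (l₁ * l₂ * l₃) = (Real.sqrt S) ^ 3 := by
      field_simp at h; linarith
    have hdetpos : 0 < l₁ * l₂ * l₃ := by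
      have : 0 < (Real.sqrt S) ^ 3 := by positivity
      nlinarith
    have hsq : 54 * (l₁ * l₂ * l₃)^2 = S^3 := by
      calc 54 * (l₁ * l₂ * l₃)^2 = (3 * Real.sqrt 6 * (l₁*l₂*l₃))^2 := by
            nlinarith [h6sq]
        _ = ((Real.sqrt S)^3)^2 := by rw [heq]
        _ = (Real.sqrt S ^ 2)^3 := by ring
        _ = S ^ 3 := by rw [hsS]
    have hprod : ((l₁ - l₂) * (l₂ - l₃) * (l₁ - l₃))^2 = 0 := by
      have hl3 : l₃ = -l₁ - l₂ := by linarith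
      subst hl3; subst hS; nlinarith [hsq]
    have := pow_eq_zero_iff (n := 2) (by norm_num) |>.mp hprod
    rcases mul_eq_zero.mp this with h' | h13
    · rcases mul_eq_zero.mp h' with h12' | h23'
      · exfalso
        have hl1 : l₁ = l₂ := by linarith [sub_eq_zero.mp h12']
        have hl3 : l₃ = -2*l₁ := by linarith
        nlinarith [hdetpos]
      · linarith [sub_eq_zero.mp h23']
    · have : l₁ = l₃ := sub_eq_zero.mp h13
      linarith
  · intro h
    have hl1 : l₁ = -2*l₂ := by linarith
    have hSval : S = 6 * l₂^2 := by rw [hS, hl1, ← h]; ring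
    have hl2ne : l₂ ≠ 0 := by rintro rfl; rw [hSval] at hSpos; norm_num at hSpos
    have hl2neg : l₂ < 0 := by
      rcases lt_or_gt_of_ne hl2ne with h' | h'
      · exact h'
      · exfalso; linarith
    have hsqrt : Real.sqrt S = Real.sqrt 6 * (-l₂) := by
      rw [hSval]
      rw [show (6:ℝ) * l₂^2 = (Real.sqrt 6 * (-l₂))^2 by nlinarith [h6sq]]
      exact Real.sqrt_sq (by nlinarith)
    rw [hsqrt, hl1, ← h]
    have hne : Real.sqrt 6 * (-l₂) ≠ 0 :=
      mul_ne_zero h6.ne' (neg_ne_zero.mpr hl2ne)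
    have hcube : Real.sqrt 6 ^ 3 = 6 * Real.sqrt 6 := by
      rw [pow_succ, h6sq]
    field_simp
    rw [h6sq]; norm_num

open Polynomial in
/-- For a nonzero real symmetric traceless 3×3 matrix `A` with
eigenvalues `l₁ ≥ l₂ ≥ l₃`, we have `μ(A) = 1` iff `l₂ = l₃`. -/
theorem mode_eq_one_iff_repeated_smaller_eigenvalues
    (A : Matrix (Fin 3) (Fin 3) ℝ)
    (hs : A.IsSymm) (ht : A.trace = 0) (hne : A ≠ 0)
    (l₁ l₂ l₃ : ℝ)
    (hchar : A.charpoly = (X - C l₁) * (X - C l₂) * (X - C l₃))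
    (h12 : l₂ ≤ l₁) (h23 : l₃ ≤ l₂) :
    tensorMode A = 1 ↔ l₂ = l₃ := by
  -- entry abbreviations and symmetry
  have hsym : ∀ i j, A j i = A i j := fun i j => hs.apply i j
  have h10 : A 1 0 = A 0 1 := hsym 0 1
  have h20 : A 2 0 = A 0 2 := hsym 0 2
  have h21 : A 2 1 = A 1 2 := hsym 1 2
  -- trace
  have htr : A 0 0 + A 1 1 + A 2 2 = 0 := by
    rw [← Matrix.trace_fin_three]; exact ht
  -- equate coefficients of the two charpoly expressions
  have hpoly := (charpoly_fin_three' A).symm.trans (hchar.trans (expand_factored l₁ l₂ l₃))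
  have hc2 := congrArg (fun p => Polynomial.coeff p 2) hpoly
  have hc1 := congrArg (fun p => Polynomial.coeff p 1) hpoly
  have hc0 := congrArg (fun p => Polynomial.coeff p 0) hpoly
  rw [(coeffs_cubic _ _ _).1, (coeffs_cubic _ _ _).1] at hc2
  rw [(coeffs_cubic _ _ _).2.1, (coeffs_cubic _ _ _).2.1] at hc1
  rw [(coeffs_cubic _ _ _).2.2, (coeffs_cubic _ _ _).2.2] at hc0
  have hsum : l₁ + l₂ + l₃ = 0 := by linarith [hc2, htr]
  rw [h10, h20, h21] at hc1 hc0
  -- determinant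
  have hdet : A.det = l₁ * l₂ * l₃ := by
    rw [Matrix.det_fin_three, h10, h20, h21]; linarith [hc0]
  -- sum of squares
  set S : ℝ := ∑ i, ∑ j, (A i j) ^ 2 with hSdef
  have hSexp : S = (A 0 0)^2 + (A 0 1)^2 + (A 0 2)^2 + (A 0 1)^2 + (A 1 1)^2
      + (A 1 2)^2 + (A 0 2)^2 + (A 1 2)^2 + (A 2 2)^2 := by
    simp [hSdef, Fin.sum_univ_three, h10, h20, h21]
    ring
  have hS : S = l₁^2 + l₂^2 + l₃^2 := by
    have h1 : (A 0 0 + A 1 1 + A 2 2)^2 = 0 := by rw [htr]; ring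
    have h2 : (l₁ + l₂ + l₃)^2 = 0 := by rw [hsum]; ring
    rw [hSexp]
    linear_combination h1 - h2 - 2 * hc1
  have hSnn : (0:ℝ) ≤ S := by
    rw [hSexp]; positivity
  have hSpos : 0 < S := by
    rcases hSnn.lt_or_eq with h | h
    · exact h
    · exfalso
      apply hne
      have hzero : (A 0 0)^2 + (A 0 1)^2 + (A 0 2)^2 + (A 0 1)^2 + (A 1 1)^2
          + (A 1 2)^2 + (A 0 2)^2 + (A 1 2)^2 + (A 2 2)^2 = 0 := by rw [← hSexp, ← h]
      have key : ∀ x : ℝ, x^2 ≤ 0 → x = 0 := fun x hx =>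
        (pow_eq_zero_iff (two_ne_zero)).mp (le_antisymm hx (sq_nonneg x))
      have n00 := sq_nonneg (A 0 0); have n01 := sq_nonneg (A 0 1)
      have n02 := sq_nonneg (A 0 2); have n11 := sq_nonneg (A 1 1)
      have n12 := sq_nonneg (A 1 2); have n22 := sq_nonneg (A 2 2)
      have h00 : A 0 0 = 0 := key _ (by linarith)
      have h01 : A 0 1 = 0 := key _ (by linarith)
      have h02 : A 0 2 = 0 := key _ (by linarith)
      have h11 : A 1 1 = 0 := key _ (by linarith)
      have h12' : A 1 2 = 0 := key _ (by linarith)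
      have h22 : A 2 2 = 0 := key _ (by linarith)
      ext i j
      fin_cases i <;> fin_cases j <;>
        simp [h00, h01, h02, h11, h12', h22, h10, h20, h21]
  -- conclude
  rw [tensorMode, frobeniusNorm3, ← hSdef, hdet]
  exact core_mode l₁ l₂ l₃ S hsum hS hSpos h12 h23
end
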